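/- Let 𝒲 = {ρ(x,s) : x ∈ 𝒳, s ∈ 𝒮} be an arbitrarily varying classical-quantum channel on ℂ^d, let P_X be a probability distribution on 𝒳 with rational values, and set C := inf_Q χ(P_X; ρ̄̄_Q), the infimum over all stochastic matrices Q : 𝒳 → 𝒮. For every ν > 0 and ξ > 0 there exists N ∈ ℕ such that the following holds for every n ≥ N with nP_X(x) ∈ ℕ for all x: if {𝒫(x') : x' ∈ 𝒯^n_X} is a family of orthogonal projections on (ℂ^d)^{⊗n} such that (a) the value tr[ ρ^{⊗n}(x,s) 𝒫(x') ] depends only on the joint empirical distribution of the triple (x, x', s) ∈ 𝒳^n × 𝒳^n × 𝒮^n, and (b) for every stochastic matrix Q : 𝒳 → 𝒮 and every x' ∈ 𝒯^n_X one has tr[ ( ∑_{x∈𝒳} P_X(x) ρ̄̄_Q(x) )^{⊗n} · 𝒫(x') ] < 2^{−n(C − ν)}, then for every x ∈ 𝒯^n_X and every s ∈ 𝒮^n: (1/|𝒯^n_X|) ∑_{x' ∈ 𝒯^n_X} tr[ ρ^{⊗n}(x,s) · 𝒫(x') ] < 2^{−n(C − ν − ξ)}. -/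

import Mathlib

open scoped BigOperators
open Classical
open scoped ComplexOrder

noncomputable section

/-- Number of occurrences of the symbol `a` in the sequence `x`. -/
def occ {𝒳 : Type*} [Fintype 𝒳] [DecidableEq 𝒳] {n : ℕ} (x : Fin n → 𝒳) (a : 𝒳) : ℕ :=
  (Finset.univ.filter fun t => x t = a).card

/-- The type class `𝒯^n_X` of the (rational) type `P`. -/
def typeClass {𝒳 : Type*} [Fintype 𝒳] [DecidableEq 𝒳] (P : 𝒳 → ℝ) (n : ℕ) :
    Finset (Fin n → 𝒳) :=
  Finset.univ.filter fun x => ∀ a : 𝒳, (occ x a : ℝ) = n * P a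

/-- A density operator: positive semidefinite with unit trace. -/
def IsDensityOperator {d : ℕ} (ρ : Matrix (Fin d) (Fin d) ℂ) : Prop :=
  ρ.PosSemidef ∧ ρ.trace = 1

/-- `n`-fold Kronecker (tensor) product. -/
def tensorPow {d : ℕ} (n : ℕ) (M : Fin n → Matrix (Fin d) (Fin d) ℂ) :
    Matrix (Fin n → Fin d) (Fin n → Fin d) ℂ :=
  Matrix.of fun i j => ∏ t, M t (i t) (j t)

/-- Von Neumann entropy (base 2). -/
def vNEntropy {m : Type*} [Fintype m] [DecidableEq m] (ρ : Matrix m m ℂ) : ℝ :=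
  if h : ρ.IsHermitian then -∑ i, h.eigenvalues i * Real.logb 2 (h.eigenvalues i) else 0

/-- Holevo quantity `χ(P;V)`. -/
def holevo {𝒳 m : Type*} [Fintype 𝒳] [Fintype m] [DecidableEq m]
    (P : 𝒳 → ℝ) (V : 𝒳 → Matrix m m ℂ) : ℝ :=
  vNEntropy (∑ x, (P x : ℂ) • V x) - ∑ x, P x * vNEntropy (V x)

/-- Stochastic matrices `Q : 𝒳 → 𝒮` (jamming strategies depending on the input letter). -/
def StochMat (𝒳 𝒮 : Type*) [Fintype 𝒮] : Type _ :=
  {Q : 𝒳 → 𝒮 → ℝ // (∀ x s, 0 ≤ Q x s) ∧ ∀ x, ∑ s, Q x s = 1}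

/-- The averaged cq channel `ρ̄̄_Q(x) = ∑ₛ Q(s|x) ρ(x,s)`. -/
def avgChannel {𝒳 𝒮 : Type*} [Fintype 𝒮] {d : ℕ}
    (ρ : 𝒳 → 𝒮 → Matrix (Fin d) (Fin d) ℂ) (Q : 𝒳 → 𝒮 → ℝ) (x : 𝒳) :
    Matrix (Fin d) (Fin d) ℂ :=
  ∑ s, (Q x s : ℂ) • ρ x s

/-- `inf_Q χ(P; ρ̄̄_Q)` over all stochastic matrices `Q : 𝒳 → 𝒮`. -/
def infQHolevo {𝒳 𝒮 : Type*} [Fintype 𝒳] [Fintype 𝒮] {d : ℕ}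
    (ρ : 𝒳 → 𝒮 → Matrix (Fin d) (Fin d) ℂ) (P : 𝒳 → ℝ) : ℝ :=
  ⨅ Q : StochMat 𝒳 𝒮, holevo P (avgChannel ρ Q.1)

namespace AVCAux

variable {n : ℕ} {α : Type*} [Fintype α] [DecidableEq α]

lemma occ_comp_perm (z : Fin n → α) (π : Equiv.Perm (Fin n)) (a : α) :
    occ (z ∘ π) a = occ z a := by
  unfold occ
  exact Finset.card_equiv π (by simp)

lemma fiber_card_eq_stab (z : Fin n → α) (σ : Equiv.Perm (Fin n)) :
    (Finset.univ.filter fun π : Equiv.Perm (Fin n) => z ∘ π = z ∘ σ).card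
      = (Finset.univ.filter fun π : Equiv.Perm (Fin n) => z ∘ π = z).card := by
  apply Finset.card_equiv (Equiv.mulRight σ⁻¹)
  intro π
  simp only [Finset.mem_filter, Finset.mem_univ, true_and, Equiv.coe_mulRight]
  constructor
  · intro h
    funext t
    have := congrFun h (σ⁻¹ t)
    simpa using this
  · intro h
    funext t
    have := congrFun h (σ t)
    simpa using this

lemma sum_comp_perm (z : Fin n → α) (F : (Fin n → α) → ℝ) :
    ∑ π : Equiv.Perm (Fin n), F (z ∘ π)
      = ((Finset.univ.filter fun π : Equiv.Perm (Fin n) => z ∘ π = z).card : ℝ)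
        * ∑ y ∈ Finset.univ.image (fun π : Equiv.Perm (Fin n) => z ∘ π), F y := by
  rw [Finset.sum_comp F (fun π : Equiv.Perm (Fin n) => z ∘ π), Finset.mul_sum]
  apply Finset.sum_congr rfl
  intro y hy
  obtain ⟨σ, -, rfl⟩ := Finset.mem_image.mp hy
  rw [fiber_card_eq_stab, nsmul_eq_mul]

lemma stab_mul_card_orbit (z : Fin n → α) :
    (Finset.univ.filter fun π : Equiv.Perm (Fin n) => z ∘ π = z).card
      * (Finset.univ.image (fun π : Equiv.Perm (Fin n) => z ∘ π)).card = n.factorial := by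
  have h := Finset.card_eq_sum_card_fiberwise
      (f := fun π : Equiv.Perm (Fin n) => z ∘ π) (s := Finset.univ)
      (t := Finset.univ.image (fun π : Equiv.Perm (Fin n) => z ∘ π))
      (fun π _ => Finset.mem_image_of_mem _ (Finset.mem_univ π))
  have h2 : ∀ y ∈ Finset.univ.image (fun π : Equiv.Perm (Fin n) => z ∘ π),
      (Finset.univ.filter fun π : Equiv.Perm (Fin n) => z ∘ π = y).card
        = (Finset.univ.filter fun π : Equiv.Perm (Fin n) => z ∘ π = z).card := by
    intro y hy
    obtain ⟨σ, -, rfl⟩ := Finset.mem_image.mp hy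
    exact fiber_card_eq_stab z σ
  rw [Finset.sum_congr rfl h2, Finset.sum_const, smul_eq_mul] at h
  have h3 : (Finset.univ : Finset (Equiv.Perm (Fin n))).card = n.factorial := by
    rw [Finset.card_univ, Fintype.card_perm, Fintype.card_fin]
  rw [h3] at h
  rw [mul_comm]
  exact h.symm

lemma exists_comp_perm {y z : Fin n → α} (h : ∀ a, occ y a = occ z a) :
    ∃ π : Equiv.Perm (Fin n), y = z ∘ π := by
  have hcard : ∀ a, Fintype.card {t // y t = a} = Fintype.card {t // z t = a} := by
    intro a
    simpa [Fintype.card_subtype, occ] using h a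
  refine ⟨Equiv.ofFiberEquiv (f := y) (g := z)
    (fun a => Fintype.equivOfCardEq (hcard a)), ?_⟩
  funext t
  exact (Equiv.ofFiberEquiv_map _ t).symm

lemma stab_le_prod_factorial (z : Fin n → α) :
    (Finset.univ.filter fun π : Equiv.Perm (Fin n) => z ∘ π = z).card
      ≤ ∏ a, (occ z a).factorial := by
  have key : Fintype.card {π : Equiv.Perm (Fin n) // z ∘ π = z}
      ≤ Fintype.card (∀ a, Equiv.Perm {t // z t = a}) := by
    apply Fintype.card_le_of_injective
      (fun π => fun a => Equiv.Perm.subtypePerm π.1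
        (fun t => by have hzz : z (π.1 t) = z t := congrFun π.2 t; rw [hzz]))
    intro π π' hππ
    apply Subtype.ext
    apply Equiv.ext
    intro t
    have h1 := congrFun hππ (z t)
    have h2 := DFunLike.congr_fun h1 (⟨t, rfl⟩ : {u // z u = z t})
    simpa [Equiv.Perm.subtypePerm_apply, Subtype.ext_iff] using h2
  have hcardpi : Fintype.card (∀ a, Equiv.Perm {t // z t = a})
      = ∏ a, (occ z a).factorial := by
    rw [Fintype.card_pi]
    apply Finset.prod_congr rfl
    intro a _
    rw [Fintype.card_perm, Fintype.card_subtype]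
    rfl
  have hcardsub : Fintype.card {π : Equiv.Perm (Fin n) // z ∘ π = z}
      = (Finset.univ.filter fun π : Equiv.Perm (Fin n) => z ∘ π = z).card :=
    Fintype.card_subtype _
  rw [← hcardsub, ← hcardpi]
  exact key

lemma sum_occ (z : Fin n → α) : ∑ a, occ z a = n := by
  unfold occ
  have h := Finset.card_eq_sum_card_fiberwise
      (f := z) (s := Finset.univ) (t := Finset.univ) (fun t _ => Finset.mem_univ (z t))
  rw [Finset.card_univ, Fintype.card_fin] at h
  exact h.symm

lemma occ_le (z : Fin n → α) (a : α) : occ z a ≤ n := by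
  unfold occ
  calc (Finset.univ.filter fun t => z t = a).card ≤ (Finset.univ : Finset (Fin n)).card :=
        Finset.card_le_card (Finset.filter_subset _ _)
    _ = n := by rw [Finset.card_univ, Fintype.card_fin]

lemma occ_pos_apply (z : Fin n → α) (t : Fin n) : 1 ≤ occ z (z t) := by
  unfold occ
  refine Finset.card_pos.mpr ⟨t, ?_⟩
  simp

lemma prod_comp_occ {M : Type*} [CommMonoid M] (z : Fin n → α) (F : α → M) :
    ∏ t, F (z t) = ∏ a, F a ^ occ z a := by
  have h := Finset.prod_comp (M := M) (s := (Finset.univ : Finset (Fin n))) F z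
  rw [h]
  have h2 : ∀ b ∈ Finset.univ.image z,
      F b ^ (Finset.univ.filter fun t => z t = b).card = F b ^ occ z b :=
    fun b _ => rfl
  rw [Finset.prod_congr rfl h2]
  refine Finset.prod_subset (Finset.subset_univ _)
    (f := fun a => F a ^ occ z a) ?_
  intro a _ ha
  have : occ z a = 0 := by
    unfold occ
    rw [Finset.card_eq_zero]
    rw [Finset.eq_empty_iff_forall_notMem]
    intro t ht
    simp only [Finset.mem_filter, Finset.mem_univ, true_and] at ht
    exact ha (Finset.mem_image.mpr ⟨t, Finset.mem_univ t, ht⟩)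
  simp only [this, pow_zero]

end AVCAux

namespace AVCReal

lemma pow_self_le_factorial_mul_exp : ∀ n : ℕ, (n : ℝ) ^ n ≤ (n.factorial : ℝ) * Real.exp n
  | 0 => by simp
  | (n+1) => by
    have ih := pow_self_le_factorial_mul_exp n
    have hstep : ((n : ℝ) + 1) ^ n ≤ (n : ℝ) ^ n * Real.exp 1 := by
      rcases Nat.eq_zero_or_pos n with h | h
      · subst h; simp
      · have hn : (0 : ℝ) < n := by exact_mod_cast h
        have h1 : (n : ℝ) + 1 ≤ (n : ℝ) * Real.exp (1 / n) := by
          have := Real.add_one_le_exp (1 / (n : ℝ))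
          calc (n : ℝ) + 1 = (n : ℝ) * (1 / n + 1) := by field_simp; ring
            _ ≤ (n : ℝ) * Real.exp (1 / n) := by
                apply mul_le_mul_of_nonneg_left this hn.le
        calc ((n : ℝ) + 1) ^ n ≤ ((n : ℝ) * Real.exp (1 / n)) ^ n := by
              apply pow_le_pow_left₀ (by positivity) h1
          _ = (n : ℝ) ^ n * Real.exp (1 / n) ^ n := by rw [mul_pow]
          _ = (n : ℝ) ^ n * Real.exp 1 := by
              rw [← Real.exp_nat_mul]
              congr 1
              field_simp
    have hnn : (0 : ℝ) ≤ (n : ℝ) + 1 := by positivity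
    calc ((n + 1 : ℕ) : ℝ) ^ (n + 1) = ((n : ℝ) + 1) * ((n : ℝ) + 1) ^ n := by
          push_cast; ring
      _ ≤ ((n : ℝ) + 1) * ((n : ℝ) ^ n * Real.exp 1) := by
          apply mul_le_mul_of_nonneg_left hstep hnn
      _ ≤ ((n : ℝ) + 1) * ((n.factorial : ℝ) * Real.exp n * Real.exp 1) := by
          apply mul_le_mul_of_nonneg_left _ hnn
          apply mul_le_mul_of_nonneg_right ih (Real.exp_pos 1).le
      _ = ((n + 1 : ℕ).factorial : ℝ) * Real.exp ((n + 1 : ℕ) : ℝ) := by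
          rw [Nat.factorial_succ]
          push_cast [Real.exp_add]
          ring

lemma exp_le_one_add (N : ℕ) (hN : 1 ≤ N) :
    Real.exp (1 / ((N : ℝ) + 1)) ≤ ((N : ℝ) + 1) / N := by
  have hN0 : (0 : ℝ) < N := by exact_mod_cast hN
  set x : ℝ := 1 / ((N : ℝ) + 1) with hx
  have hx0 : 0 < x := by positivity
  have hx1 : x < 1 := by
    rw [hx, div_lt_one (by positivity)]
    linarith
  have h1 : 1 - x ≤ Real.exp (-x) := by
    have := Real.add_one_le_exp (-x)
    linarith
  have h2 : Real.exp (-x) * Real.exp x = 1 := by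
    rw [← Real.exp_add]; simp
  have h3 : Real.exp x ≤ 1 / (1 - x) := by
    rw [le_div_iff₀ (by linarith)]
    nlinarith [Real.exp_pos x, Real.exp_pos (-x)]
  have h4 : 1 / (1 - x) = ((N : ℝ) + 1) / N := by
    rw [hx]
    field_simp
    simp [hN0.ne']
  rw [← h4]
  exact h3

lemma factorial_mul_exp_le : ∀ N : ℕ, 1 ≤ N →
    (N.factorial : ℝ) * Real.exp N ≤ Real.exp 1 * N * (N : ℝ) ^ N
  | 0, h => by omega
  | 1, _ => by
      simp [Nat.factorial]
  | (N+2), _ => by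
      have ih := factorial_mul_exp_le (N+1) (by omega)
      set M : ℕ := N + 1 with hM
      have hM1 : 1 ≤ M := by omega
      have hM0 : (0 : ℝ) < M := by positivity
      -- key : exp 1 * (M:ℝ)^(M+1) ≤ ((M:ℝ)+1)^(M+1)
      have hkey : Real.exp 1 * (M : ℝ) ^ (M + 1) ≤ ((M : ℝ) + 1) ^ (M + 1) := by
        have h1 : Real.exp (1 / ((M : ℝ) + 1)) ≤ ((M : ℝ) + 1) / M := exp_le_one_add M hM1
        have h2 : Real.exp 1 = Real.exp (1 / ((M : ℝ) + 1)) ^ (M + 1) := by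
          rw [← Real.exp_nat_mul]
          congr 1
          push_cast
          field_simp
        have h3 : Real.exp (1 / ((M : ℝ) + 1)) ^ (M + 1) ≤ (((M : ℝ) + 1) / M) ^ (M + 1) :=
          pow_le_pow_left₀ (Real.exp_pos _).le h1 _
        calc Real.exp 1 * (M : ℝ) ^ (M + 1)
            ≤ (((M : ℝ) + 1) / M) ^ (M + 1) * (M : ℝ) ^ (M + 1) := by
              apply mul_le_mul_of_nonneg_right (h2 ▸ h3) (by positivity)
          _ = ((M : ℝ) + 1) ^ (M + 1) := by
              rw [div_pow, div_mul_cancel₀]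
              positivity
      calc (((M + 1 : ℕ)).factorial : ℝ) * Real.exp ((M + 1 : ℕ) : ℝ)
          = ((M : ℝ) + 1) * ((M.factorial : ℝ) * Real.exp M) * Real.exp 1 := by
            rw [Nat.factorial_succ]
            push_cast [Real.exp_add]
            ring
        _ ≤ ((M : ℝ) + 1) * (Real.exp 1 * M * (M : ℝ) ^ M) * Real.exp 1 := by
            have hnn : (0 : ℝ) ≤ (M : ℝ) + 1 := by positivity
            have := mul_le_mul_of_nonneg_left ih hnn
            nlinarith [Real.exp_pos 1, this]
        _ = ((M : ℝ) + 1) * (Real.exp 1 * (M : ℝ) ^ (M + 1)) * Real.exp 1 := by ring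
        _ ≤ ((M : ℝ) + 1) * ((M : ℝ) + 1) ^ (M + 1) * Real.exp 1 := by
            apply mul_le_mul_of_nonneg_right _ (Real.exp_pos 1).le
            apply mul_le_mul_of_nonneg_left hkey (by positivity)
        _ = Real.exp 1 * ((M + 1 : ℕ) : ℝ) * (((M + 1 : ℕ) : ℝ)) ^ (M + 1) := by
            push_cast
            ring

end AVCReal

section KeyCount
variable {n : ℕ} {α : Type*} [Fintype α] [DecidableEq α]

lemma key_count (z : Fin n → α) (hn : 1 ≤ n) :
    (n : ℝ) ^ n * ∏ a, ((occ z a).factorial : ℝ)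
      ≤ (Real.exp 1 * n) ^ (Fintype.card α) * (n.factorial : ℝ)
        * ∏ a, ((occ z a : ℝ)) ^ (occ z a) := by
  classical
  set S : Finset α := Finset.univ.filter fun a => occ z a ≠ 0 with hS
  have hnR : (1 : ℝ) ≤ n := by exact_mod_cast hn
  have h1 : (∏ a, ((occ z a).factorial : ℝ)) = ∏ a ∈ S, ((occ z a).factorial : ℝ) := by
    refine (Finset.prod_subset (Finset.filter_subset _ _) ?_).symm
    intro a _ ha
    have : occ z a = 0 := by
      by_contra hne
      exact ha (Finset.mem_filter.mpr ⟨Finset.mem_univ a, hne⟩)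
    simp [this]
  have h3 : (∏ a ∈ S, ((occ z a).factorial : ℝ))
      ≤ ∏ a ∈ S, (Real.exp 1 * (occ z a) * ((occ z a : ℝ)) ^ (occ z a)
          * Real.exp (-(occ z a : ℝ))) := by
    apply Finset.prod_le_prod
    · intro a _; positivity
    · intro a haS
      have h1a : 1 ≤ occ z a := Nat.one_le_iff_ne_zero.mpr (Finset.mem_filter.mp haS).2
      have hf := AVCReal.factorial_mul_exp_le (occ z a) h1a
      have hepos : (0 : ℝ) < Real.exp (occ z a) := Real.exp_pos _
      have : ((occ z a).factorial : ℝ)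
          = ((occ z a).factorial : ℝ) * Real.exp (occ z a) * Real.exp (-(occ z a : ℝ)) := by
        rw [mul_assoc, ← Real.exp_add]
        simp
      rw [this]
      apply mul_le_mul_of_nonneg_right hf (Real.exp_pos _).le
  have h4 : ∏ a ∈ S, (Real.exp 1 * (occ z a) * ((occ z a : ℝ)) ^ (occ z a)
          * Real.exp (-(occ z a : ℝ)))
      = (∏ a ∈ S, Real.exp 1 * (occ z a)) * (∏ a ∈ S, ((occ z a : ℝ)) ^ (occ z a))
        * ∏ a ∈ S, Real.exp (-(occ z a : ℝ)) := by
    rw [← Finset.prod_mul_distrib, ← Finset.prod_mul_distrib]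
  have hsum : ∑ a ∈ S, (occ z a : ℝ) = n := by
    have : ∑ a ∈ S, (occ z a : ℝ) = ∑ a, (occ z a : ℝ) := by
      refine Finset.sum_subset (Finset.filter_subset _ _) ?_
      intro a _ ha
      have : occ z a = 0 := by
        by_contra hne
        exact ha (Finset.mem_filter.mpr ⟨Finset.mem_univ a, hne⟩)
      simp [this]
    rw [this, ← Nat.cast_sum, AVCAux.sum_occ]
  have h5 : ∏ a ∈ S, Real.exp (-(occ z a : ℝ)) = Real.exp (-(n : ℝ)) := by
    rw [← Real.exp_sum]
    congr 1
    rw [Finset.sum_neg_distrib, hsum]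
  have h6 : ∏ a ∈ S, ((occ z a : ℝ)) ^ (occ z a) = ∏ a, ((occ z a : ℝ)) ^ (occ z a) := by
    refine Finset.prod_subset (Finset.filter_subset _ _) ?_
    intro a _ ha
    have : occ z a = 0 := by
      by_contra hne
      exact ha (Finset.mem_filter.mpr ⟨Finset.mem_univ a, hne⟩)
    simp [this]
  have h7 : ∏ a ∈ S, (Real.exp 1 * (occ z a)) ≤ (Real.exp 1 * n) ^ (Fintype.card α) := by
    have hstep : ∏ a ∈ S, (Real.exp 1 * (occ z a)) ≤ (Real.exp 1 * n) ^ S.card := by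
      rw [← Finset.prod_const]
      apply Finset.prod_le_prod
      · intro a _; positivity
      · intro a _
        have : (occ z a : ℝ) ≤ n := by exact_mod_cast AVCAux.occ_le z a
        have he : (0:ℝ) < Real.exp 1 := Real.exp_pos 1
        nlinarith
    refine hstep.trans ?_
    apply pow_le_pow_right₀
    · have he1 : (1:ℝ) ≤ Real.exp 1 := by
        have := Real.add_one_le_exp (1:ℝ); linarith
      nlinarith
    · calc S.card ≤ (Finset.univ : Finset α).card := Finset.card_le_card (Finset.filter_subset _ _)
        _ = Fintype.card α := Finset.card_univ
  have h8 : (n : ℝ) ^ n ≤ (n.factorial : ℝ) * Real.exp n := AVCReal.pow_self_le_factorial_mul_exp n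
  have hprodnn : (0:ℝ) ≤ ∏ a ∈ S, ((occ z a).factorial : ℝ) := by positivity
  calc (n : ℝ) ^ n * ∏ a, ((occ z a).factorial : ℝ)
      = (n : ℝ) ^ n * ∏ a ∈ S, ((occ z a).factorial : ℝ) := by rw [h1]
    _ ≤ ((n.factorial : ℝ) * Real.exp n) * ∏ a ∈ S, ((occ z a).factorial : ℝ) := by
        apply mul_le_mul_of_nonneg_right h8 hprodnn
    _ ≤ ((n.factorial : ℝ) * Real.exp n)
          * ((∏ a ∈ S, Real.exp 1 * (occ z a)) * (∏ a, ((occ z a : ℝ)) ^ (occ z a))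
              * Real.exp (-(n : ℝ))) := by
        apply mul_le_mul_of_nonneg_left _ (by positivity)
        calc (∏ a ∈ S, ((occ z a).factorial : ℝ))
            ≤ (∏ a ∈ S, Real.exp 1 * (occ z a)) * (∏ a ∈ S, ((occ z a : ℝ)) ^ (occ z a))
                * ∏ a ∈ S, Real.exp (-(occ z a : ℝ)) := h3.trans (le_of_eq h4)
          _ = (∏ a ∈ S, Real.exp 1 * (occ z a)) * (∏ a, ((occ z a : ℝ)) ^ (occ z a))
                * Real.exp (-(n : ℝ)) := by rw [h5, h6]
    _ ≤ ((n.factorial : ℝ) * Real.exp n)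
          * ((Real.exp 1 * n) ^ (Fintype.card α) * (∏ a, ((occ z a : ℝ)) ^ (occ z a))
              * Real.exp (-(n : ℝ))) := by
        apply mul_le_mul_of_nonneg_left _ (by positivity)
        apply mul_le_mul_of_nonneg_right _ (Real.exp_pos _).le
        apply mul_le_mul_of_nonneg_right h7 (by positivity)
    _ = (Real.exp 1 * n) ^ (Fintype.card α) * (n.factorial : ℝ)
          * ∏ a, ((occ z a : ℝ)) ^ (occ z a) := by
        rw [show ((n.factorial : ℝ) * Real.exp n)
          * ((Real.exp 1 * n) ^ (Fintype.card α) * (∏ a, ((occ z a : ℝ)) ^ (occ z a))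
              * Real.exp (-(n : ℝ)))
          = (Real.exp n * Real.exp (-(n:ℝ))) * ((Real.exp 1 * n) ^ (Fintype.card α)
              * (n.factorial : ℝ) * ∏ a, ((occ z a : ℝ)) ^ (occ z a)) from by ring]
        rw [← Real.exp_add]
        simp


end KeyCount

section MatrixAux
open Matrix
variable {d : ℕ}

open scoped MatrixOrder in
theorem Matrix.posSemidef_iff_eq_transpose_mul_self {m : Type*} [Fintype m] [DecidableEq m]
    {A : Matrix m m ℂ} : A.PosSemidef ↔ ∃ B : Matrix m m ℂ, A = Bᴴ * B := by
  constructor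
  · intro hA
    obtain ⟨B, rfl⟩ := CStarAlgebra.nonneg_iff_eq_star_mul_self.mp hA.nonneg
    exact ⟨B, rfl⟩
  · rintro ⟨B, rfl⟩
    exact Matrix.posSemidef_conjTranspose_mul_self B

lemma tensorPow_posSemidef {n : ℕ} (M : Fin n → Matrix (Fin d) (Fin d) ℂ)
    (h : ∀ t, (M t).PosSemidef) : (tensorPow n M).PosSemidef := by
  choose B hB using fun t => Matrix.posSemidef_iff_eq_transpose_mul_self.mp (h t)
  have hEq : tensorPow n M = (tensorPow n B)ᴴ * (tensorPow n B) := by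
    ext i j
    simp only [tensorPow, Matrix.mul_apply, Matrix.conjTranspose_apply, Matrix.of_apply]
    symm
    calc ∑ k : Fin n → Fin d, star (∏ t, B t (k t) (i t)) * ∏ t, B t (k t) (j t)
        = ∑ k : Fin n → Fin d, ∏ t, (star (B t (k t) (i t)) * B t (k t) (j t)) := by
          apply Finset.sum_congr rfl; intro k _
          rw [star_prod, ← Finset.prod_mul_distrib]
      _ = ∏ t, ∑ m, star (B t m (i t)) * B t m (j t) := by
          symm
          rw [Finset.prod_univ_sum, Fintype.piFinset_univ]
      _ = ∏ t, M t (i t) (j t) := by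
          apply Finset.prod_congr rfl; intro t _
          rw [hB t]
          simp [Matrix.mul_apply, Matrix.conjTranspose_apply]
  rw [hEq]
  exact Matrix.posSemidef_conjTranspose_mul_self _

lemma trace_mul_re_nonneg {m : Type*} [Fintype m] [DecidableEq m]
    {A B : Matrix m m ℂ} (hA : A.PosSemidef) (hB : B.PosSemidef) :
    0 ≤ ((A * B).trace).re := by
  obtain ⟨C, rfl⟩ := Matrix.posSemidef_iff_eq_transpose_mul_self.mp hA
  rw [Matrix.mul_assoc, Matrix.trace_mul_comm]
  have hP : ((C * B) * Cᴴ).PosSemidef := by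
    have := hB.mul_mul_conjTranspose_same C
    simpa [Matrix.mul_assoc] using this
  have h0 : (0 : ℂ) ≤ ((C * B) * Cᴴ).trace := by
    rw [Matrix.trace]
    apply Finset.sum_nonneg
    intro i _
    have hdi := (Matrix.posSemidef_iff_dotProduct_mulVec.mp hP).2 (Pi.single i 1)
    simpa [dotProduct, Matrix.mulVec, Pi.single_apply, Finset.sum_ite_eq',
      Matrix.diag] using hdi
  simpa using (Complex.le_def.mp h0).1

lemma proj_posSemidef {m : Type*} [Fintype m] [DecidableEq m]
    {Pm : Matrix m m ℂ} (h1 : Pm.IsHermitian) (h2 : Pm * Pm = Pm) : Pm.PosSemidef := by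
  rw [Matrix.posSemidef_iff_eq_transpose_mul_self]
  refine ⟨Pm, ?_⟩
  rw [show Pmᴴ = Pm from h1]
  exact h2.symm

lemma tensorPow_expand {β : Type*} [Fintype β] [DecidableEq β] (w : β → ℂ)
    (M : β → Matrix (Fin d) (Fin d) ℂ) (n : ℕ) :
    tensorPow n (fun _ => ∑ b, w b • M b)
      = ∑ g : Fin n → β, (∏ t, w (g t)) • tensorPow n (fun t => M (g t)) := by
  ext i j
  simp only [tensorPow, Matrix.of_apply, Matrix.sum_apply, Matrix.smul_apply, smul_eq_mul]
  rw [Finset.prod_univ_sum, Fintype.piFinset_univ]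
  apply Finset.sum_congr rfl
  intro g _
  rw [Finset.prod_mul_distrib]

end MatrixAux


/-- **Averaging a permutation-covariant projector family against the worst state sequence**
(Corollary 1 of the paper).  If the family `{𝒫(x') : x' ∈ 𝒯^n_X}` of projections is such
that (a) `tr[ρ^{⊗n}(x,s) 𝒫(x')]` depends only on the joint empirical distribution of
`(x, x', s)` and (b) each averaged i.i.d. state is accepted with probability at most
`2^{−n(C−ν)}`, then for every `x ∈ 𝒯^n_X` and `s ∈ 𝒮ⁿ` the average of
`tr[ρ^{⊗n}(x,s) 𝒫(x')]` over a uniformly random `x' ∈ 𝒯^n_X` is less than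
`2^{−n(C−ν−ξ)}`, where `C = inf_Q χ(P_X; ρ̄̄_Q)`. -/
theorem avg_trace_lt
    {𝒳 𝒮 : Type*} [Fintype 𝒳] [Nonempty 𝒳] [DecidableEq 𝒳]
    [Fintype 𝒮] [Nonempty 𝒮] [DecidableEq 𝒮] {d : ℕ}
    (ρ : 𝒳 → 𝒮 → Matrix (Fin d) (Fin d) ℂ) (hρ : ∀ x s, IsDensityOperator (ρ x s))
    (P : 𝒳 → ℝ) (hP0 : ∀ x, 0 ≤ P x) (hP1 : ∑ x, P x = 1)
    (hPrat : ∀ x, ∃ r : ℚ, P x = (r : ℝ)) :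
    ∀ ν > (0 : ℝ), ∀ ξ > (0 : ℝ), ∃ N : ℕ, ∀ n ≥ N,
      (∀ a : 𝒳, ∃ m : ℕ, (n : ℝ) * P a = m) →
      ∀ Pmat : (Fin n → 𝒳) → Matrix (Fin n → Fin d) (Fin n → Fin d) ℂ,
        -- the family consists of orthogonal projections
        (∀ x' : Fin n → 𝒳, (Pmat x').IsHermitian ∧ Pmat x' * Pmat x' = Pmat x') →
        -- (a) the trace depends only on the joint empirical distribution of (x, x', s)
        (∀ x₁ x₂ x₁' x₂' : Fin n → 𝒳, ∀ s₁ s₂ : Fin n → 𝒮,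
          (∀ (a b : 𝒳) (c : 𝒮),
            (Finset.univ.filter fun t => x₁ t = a ∧ x₁' t = b ∧ s₁ t = c).card =
            (Finset.univ.filter fun t => x₂ t = a ∧ x₂' t = b ∧ s₂ t = c).card) →
          ((tensorPow n (fun t => ρ (x₁ t) (s₁ t)) * Pmat x₁').trace).re =
            ((tensorPow n (fun t => ρ (x₂ t) (s₂ t)) * Pmat x₂').trace).re) →
        -- (b) each averaged i.i.d. state is accepted with probability < 2^{−n(C−ν)}
        (∀ Q : StochMat 𝒳 𝒮, ∀ x' ∈ typeClass P n,
          ((tensorPow n (fun _ => ∑ a, (P a : ℂ) • avgChannel ρ Q.1 a) * Pmat x').trace).re <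
            (2 : ℝ) ^ (-(n : ℝ) * (infQHolevo ρ P - ν))) →
        ∀ x ∈ typeClass P n, ∀ s : Fin n → 𝒮,
          (1 / ((typeClass P n).card : ℝ)) *
              ∑ x' ∈ typeClass P n,
                ((tensorPow n (fun t => ρ (x t) (s t)) * Pmat x').trace).re <
            (2 : ℝ) ^ (-(n : ℝ) * (infQHolevo ρ P - ν - ξ)) := by
  intro ν hν ξ hξ
  -- ===== choice of N =====
  have h2ξ : (1 : ℝ) < (2 : ℝ) ^ ξ := by
    rw [Real.one_lt_rpow_iff_of_pos (by norm_num)]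
    first
    | exact ⟨by norm_num, hξ⟩
    | exact Or.inl ⟨by norm_num, hξ⟩
  obtain ⟨N, hN⟩ : ∃ N : ℕ, ∀ n ≥ N, 1 ≤ n ∧
      (Real.exp 1 * n) ^ (Fintype.card (𝒳 × 𝒮)) < (2 : ℝ) ^ ((n : ℝ) * ξ) := by
    have hev := (tendsto_pow_const_div_const_pow_of_one_lt
        (Fintype.card (𝒳 × 𝒮)) h2ξ).eventually_lt_const
        (show (0:ℝ) < ((Real.exp 1) ^ (Fintype.card (𝒳 × 𝒮)))⁻¹ by positivity)
    obtain ⟨N, hN⟩ := Filter.eventually_atTop.mp (hev.and (Filter.eventually_ge_atTop 1))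
    refine ⟨N, fun n hn => ⟨(hN n hn).2, ?_⟩⟩
    obtain ⟨h1, h2⟩ := hN n hn
    have hrpos : (0:ℝ) < ((2:ℝ) ^ ξ) ^ n := by positivity
    have hE : (0:ℝ) < (Real.exp 1) ^ (Fintype.card (𝒳 × 𝒮)) := by positivity
    have h3 : (n:ℝ) ^ (Fintype.card (𝒳 × 𝒮)) * (Real.exp 1) ^ (Fintype.card (𝒳 × 𝒮))
        < ((2:ℝ) ^ ξ) ^ n := by
      rw [div_lt_iff₀ hrpos] at h1
      calc (n:ℝ) ^ (Fintype.card (𝒳 × 𝒮)) * (Real.exp 1) ^ (Fintype.card (𝒳 × 𝒮))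
          < (((Real.exp 1) ^ (Fintype.card (𝒳 × 𝒮)))⁻¹ * ((2:ℝ) ^ ξ) ^ n)
              * (Real.exp 1) ^ (Fintype.card (𝒳 × 𝒮)) := by
            apply mul_lt_mul_of_pos_right h1 hE
        _ = ((2:ℝ) ^ ξ) ^ n := by field_simp
    have h4 : ((2:ℝ) ^ ξ) ^ n = (2:ℝ) ^ ((n : ℝ) * ξ) := by
      rw [mul_comm, Real.rpow_mul (by norm_num : (0:ℝ) ≤ 2), Real.rpow_natCast]
    rw [← h4, mul_pow]
    calc (Real.exp 1) ^ (Fintype.card (𝒳 × 𝒮)) * (n:ℝ) ^ (Fintype.card (𝒳 × 𝒮))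
        = (n:ℝ) ^ (Fintype.card (𝒳 × 𝒮)) * (Real.exp 1) ^ (Fintype.card (𝒳 × 𝒮)) := by ring
      _ < ((2:ℝ) ^ ξ) ^ n := h3
  refine ⟨N, ?_⟩
  intro n hn hInt Pmat hProj ha hb x hx s
  obtain ⟨hn1, hngrow⟩ := hN n hn
  have hnR : (0:ℝ) < n := by exact_mod_cast hn1
  -- ===== basic facts about x and its type =====
  have hx' : ∀ a, (occ x a : ℝ) = n * P a := by
    have := Finset.mem_filter.mp hx
    simpa [typeClass] using this.2
  have hxpos : ∀ t, 0 < P (x t) := by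
    intro t
    have h1 : 1 ≤ occ x (x t) := AVCAux.occ_pos_apply x t
    have h2 : (1:ℝ) ≤ (occ x (x t) : ℝ) := by exact_mod_cast h1
    nlinarith [hx' (x t)]
  -- ===== the empirical conditional type Q0 =====
  set Q0 : 𝒳 → 𝒮 → ℝ := fun a c =>
    if P a = 0 then ((Fintype.card 𝒮 : ℝ))⁻¹
    else (occ (fun t => (x t, s t)) (a, c) : ℝ) / (n * P a) with hQ0def
  have hfib : ∀ a, ∑ c, occ (fun t => (x t, s t)) (a, c) = occ x a := by
    intro a
    have h := Finset.card_eq_sum_card_fiberwise (f := s)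
      (s := Finset.univ.filter fun t => x t = a) (t := Finset.univ)
      (fun t _ => Finset.mem_univ (s t))
    have h2 : ∀ c, occ (fun t => (x t, s t)) (a, c)
        = ((Finset.univ.filter fun t => x t = a).filter fun t => s t = c).card := by
      intro c
      rw [Finset.filter_filter]
      unfold occ
      congr 1
      apply Finset.filter_congr
      intro t _
      simp [Prod.ext_iff]
    rw [show occ x a = (Finset.univ.filter fun t => x t = a).card from rfl, h]
    exact Finset.sum_congr rfl (fun c _ => h2 c)
  have hQ01 : ∀ a c, 0 ≤ Q0 a c := by
    intro a c
    rw [hQ0def]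
    dsimp only
    split
    · positivity
    · have hPa : 0 < P a := lt_of_le_of_ne (hP0 a) (Ne.symm (by assumption))
      positivity
  have hQ0s : ∀ a, ∑ c, Q0 a c = 1 := by
    intro a
    rw [hQ0def]
    dsimp only
    by_cases hPa : P a = 0
    · simp only [hPa, if_true]
      rw [Finset.sum_const, Finset.card_univ, nsmul_eq_mul]
      rw [mul_inv_cancel₀]
      exact_mod_cast Fintype.card_ne_zero
    · simp only [hPa, if_false]
      rw [← Finset.sum_div]
      rw [show (∑ c, (occ (fun t => (x t, s t)) (a, c) : ℝ)) = ((∑ c, occ (fun t => (x t, s t)) (a, c) : ℕ) : ℝ) from by push_cast; rfl]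
      rw [hfib a, hx' a, div_self]
      have hPa' : 0 < P a := lt_of_le_of_ne (hP0 a) (Ne.symm hPa)
      positivity

  -- ===== hypothesis (b) applied to the empirical conditional type =====
  have hB0 : (0:ℝ) < (2 : ℝ) ^ (-(n : ℝ) * (infQHolevo ρ P - ν)) :=
    Real.rpow_pos_of_pos (by norm_num) _
  have hbb : ((tensorPow n (fun _ => ∑ a, (P a : ℂ) • avgChannel ρ Q0 a) * Pmat x).trace).re
      < (2 : ℝ) ^ (-(n : ℝ) * (infQHolevo ρ P - ν)) :=
    hb ⟨Q0, hQ01, hQ0s⟩ x hx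
  -- ===== expansion of the iid state =====
  have hσ : (∑ a, (P a : ℂ) • avgChannel ρ Q0 a)
      = ∑ i : 𝒳 × 𝒮, (((P i.1 : ℝ) : ℂ) * ((Q0 i.1 i.2 : ℝ) : ℂ)) • ρ i.1 i.2 := by
    rw [Fintype.sum_prod_type]
    apply Finset.sum_congr rfl
    intro a _
    rw [avgChannel, Finset.smul_sum]
    apply Finset.sum_congr rfl
    intro c _
    rw [smul_smul]
  have hTr : ((tensorPow n (fun _ => ∑ a, (P a : ℂ) • avgChannel ρ Q0 a) * Pmat x).trace).re
      = ∑ g : Fin n → 𝒳 × 𝒮,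
          (∏ t, (P (g t).1 * Q0 (g t).1 (g t).2))
            * ((tensorPow n (fun t => ρ (g t).1 (g t).2) * Pmat x).trace).re := by
    rw [hσ, tensorPow_expand (w := fun i : 𝒳 × 𝒮 => (((P i.1 : ℝ) : ℂ) * ((Q0 i.1 i.2 : ℝ) : ℂ)))
        (M := fun i : 𝒳 × 𝒮 => ρ i.1 i.2)]
    rw [Finset.sum_mul, Matrix.trace_sum, Complex.re_sum]
    apply Finset.sum_congr rfl
    intro g _
    rw [Matrix.smul_mul, Matrix.trace_smul, smul_eq_mul]
    rw [show (∏ t, (((P ((g t).1) : ℝ) : ℂ) * ((Q0 ((g t).1) ((g t).2) : ℝ) : ℂ)))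
        = (((∏ t, (P ((g t).1) * Q0 ((g t).1) ((g t).2)) : ℝ)) : ℂ) from by push_cast; rfl]
    rw [Complex.re_ofReal_mul]
  -- ===== nonnegativity =====
  have hGnn : ∀ g : Fin n → 𝒳 × 𝒮,
      0 ≤ ((tensorPow n (fun t => ρ (g t).1 (g t).2) * Pmat x).trace).re := by
    intro g
    exact trace_mul_re_nonneg
      (tensorPow_posSemidef _ (fun t => (hρ _ _).1))
      (proj_posSemidef (hProj x).1 (hProj x).2)
  have hwnn : ∀ g : Fin n → 𝒳 × 𝒮, 0 ≤ ∏ t, (P (g t).1 * Q0 (g t).1 (g t).2) :=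
    fun g => Finset.prod_nonneg (fun t _ => mul_nonneg (hP0 _) (hQ01 _ _))
  -- ===== the pair sequence and its probability =====
  set Z : Fin n → 𝒳 × 𝒮 := fun t => (x t, s t) with hZ
  have hw : ∀ t, P (x t) * Q0 (x t) (s t) = (occ Z (Z t) : ℝ) / n := by
    intro t
    rw [hQ0def]
    dsimp only
    rw [if_neg (hxpos t).ne']
    rw [show Z t = (x t, s t) from rfl]
    rw [show occ (fun t => (x t, s t)) ((x t, s t)) = occ Z ((x t, s t)) from rfl]
    have hPne : P (x t) ≠ 0 := (hxpos t).ne'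
    have hnne : (n:ℝ) ≠ 0 := hnR.ne'
    field_simp
  set p : ℝ := ∏ t, (P (x t) * Q0 (x t) (s t)) with hpdef
  have hp1 : p = ∏ t, ((occ Z (Z t) : ℝ) / n) := by
    rw [hpdef]
    exact Finset.prod_congr rfl (fun t _ => hw t)
  have hppos : 0 < p := by
    rw [hp1]
    apply Finset.prod_pos
    intro t _
    have h1 : 1 ≤ occ Z (Z t) := AVCAux.occ_pos_apply Z t
    have h2 : (0:ℝ) < (occ Z (Z t) : ℝ) := by exact_mod_cast h1
    positivity
  -- ===== orbits and stabilizers =====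
  set SZ : Finset (Fin n → 𝒳 × 𝒮) :=
    Finset.univ.image (fun π : Equiv.Perm (Fin n) => Z ∘ π) with hSZdef
  set SX : Finset (Fin n → 𝒳) :=
    Finset.univ.image (fun π : Equiv.Perm (Fin n) => x ∘ π) with hSXdef
  set cz : ℕ := (Finset.univ.filter fun π : Equiv.Perm (Fin n) => Z ∘ π = Z).card with hczdef
  set cx : ℕ := (Finset.univ.filter fun π : Equiv.Perm (Fin n) => x ∘ π = x).card with hcxdef
  have hT : typeClass P n = SX := by
    rw [hSXdef]
    ext y
    simp only [Finset.mem_image, Finset.mem_univ, true_and, typeClass, Finset.mem_filter]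
    constructor
    · intro hy
      have hocc : ∀ a, occ y a = occ x a := by
        intro a
        have : (occ y a : ℝ) = (occ x a : ℝ) := by rw [hy a, hx' a]
        exact_mod_cast this
      obtain ⟨π, hπ⟩ := AVCAux.exists_comp_perm hocc
      exact ⟨π, hπ.symm⟩
    · rintro ⟨π, rfl⟩
      intro a
      rw [AVCAux.occ_comp_perm]
      exact hx' a
  have hfactx : cx * SX.card = n.factorial := AVCAux.stab_mul_card_orbit x
  have hfactz : cz * SZ.card = n.factorial := AVCAux.stab_mul_card_orbit Z
  have hcx1 : 1 ≤ cx := by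
    rw [hcxdef]
    apply Finset.card_pos.mpr
    exact ⟨1, by simp⟩
  have hcz1 : 1 ≤ cz := by
    rw [hczdef]
    apply Finset.card_pos.mpr
    exact ⟨1, by simp⟩
  have hSZpos : (0:ℝ) < (SZ.card : ℝ) := by
    have : SZ.Nonempty := by
      rw [hSZdef]
      exact Finset.Nonempty.image Finset.univ_nonempty _
    exact_mod_cast Finset.card_pos.mpr this
  have hSXpos : (0:ℝ) < (SX.card : ℝ) := by
    have : SX.Nonempty := by
      rw [hSXdef]
      exact Finset.Nonempty.image Finset.univ_nonempty _
    exact_mod_cast Finset.card_pos.mpr this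
  have hcxR : (0:ℝ) < (cx : ℝ) := by exact_mod_cast hcx1
  have hfxR : (cx : ℝ) * (SX.card : ℝ) = (n.factorial : ℝ) := by exact_mod_cast hfactx
  have hfzR : (cz : ℝ) * (SZ.card : ℝ) = (n.factorial : ℝ) := by exact_mod_cast hfactz
  -- ===== the permutation sums =====
  have e1 : ∑ π : Equiv.Perm (Fin n),
        ((tensorPow n (fun t => ρ (x t) (s t)) * Pmat (x ∘ π)).trace).re
      = (cx : ℝ) * ∑ x' ∈ SX,
          ((tensorPow n (fun t => ρ (x t) (s t)) * Pmat x').trace).re :=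
    AVCAux.sum_comp_perm x
      (fun x' => ((tensorPow n (fun t => ρ (x t) (s t)) * Pmat x').trace).re)
  have hA1 : ∀ π : Equiv.Perm (Fin n),
      ((tensorPow n (fun t => ρ ((Z ∘ π) t).1 ((Z ∘ π) t).2) * Pmat x).trace).re
        = ((tensorPow n (fun t => ρ (x t) (s t)) * Pmat (x ∘ ⇑(π⁻¹))).trace).re := by
    intro π
    have hcount : ∀ (a b : 𝒳) (c : 𝒮),
        (Finset.univ.filter fun t => (x ∘ π) t = a ∧ x t = b ∧ (s ∘ π) t = c).card =
        (Finset.univ.filter fun t => x t = a ∧ (x ∘ ⇑(π⁻¹)) t = b ∧ s t = c).card := by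
      intro a b c
      apply Finset.card_equiv π
      intro t
      simp [Function.comp]
    exact ha (x ∘ π) x x (x ∘ ⇑(π⁻¹)) (s ∘ π) s hcount
  have e3 : ∑ π : Equiv.Perm (Fin n),
        ((tensorPow n (fun t => ρ (x t) (s t)) * Pmat (x ∘ π)).trace).re
      = ∑ π : Equiv.Perm (Fin n),
          ((tensorPow n (fun t => ρ ((Z ∘ π) t).1 ((Z ∘ π) t).2) * Pmat x).trace).re := by
    refine Finset.sum_equiv
      (⟨fun π => π⁻¹, fun π => π⁻¹, fun π => by simp, fun π => by simp⟩ :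
        Equiv.Perm (Fin n) ≃ Equiv.Perm (Fin n)) (by simp) ?_
    intro π _
    dsimp only [Equiv.coe_fn_mk]
    rw [hA1 π⁻¹]
    rw [show ((π⁻¹ : Equiv.Perm (Fin n))⁻¹) = π from inv_inv π]
  have e4 : ∑ π : Equiv.Perm (Fin n),
        ((tensorPow n (fun t => ρ ((Z ∘ π) t).1 ((Z ∘ π) t).2) * Pmat x).trace).re
      = (cz : ℝ) * ∑ g ∈ SZ,
          ((tensorPow n (fun t => ρ (g t).1 (g t).2) * Pmat x).trace).re :=
    AVCAux.sum_comp_perm Z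
      (fun g => ((tensorPow n (fun t => ρ (g t).1 (g t).2) * Pmat x).trace).re)
  -- ===== weights are constant on the orbit =====
  have hwconst : ∀ g ∈ SZ, (∏ t, (P (g t).1 * Q0 (g t).1 (g t).2)) = p := by
    intro g hg
    rw [hSZdef] at hg
    obtain ⟨σ, -, rfl⟩ := Finset.mem_image.mp hg
    have h1 : ∏ t, (P ((Z ∘ σ) t).1 * Q0 ((Z ∘ σ) t).1 ((Z ∘ σ) t).2)
        = ∏ t, (P (Z t).1 * Q0 (Z t).1 (Z t).2) :=
      Equiv.prod_comp σ (fun u => P (Z u).1 * Q0 (Z u).1 (Z u).2)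
    rw [h1, hpdef]
  -- ===== the key inequality from (b) =====
  have hGle : (∑ g ∈ SZ, ((tensorPow n (fun t => ρ (g t).1 (g t).2) * Pmat x).trace).re)
      < (2 : ℝ) ^ (-(n : ℝ) * (infQHolevo ρ P - ν)) / p := by
    rw [lt_div_iff₀ hppos]
    calc (∑ g ∈ SZ, ((tensorPow n (fun t => ρ (g t).1 (g t).2) * Pmat x).trace).re) * p
        = ∑ g ∈ SZ, (∏ t, (P (g t).1 * Q0 (g t).1 (g t).2))
            * ((tensorPow n (fun t => ρ (g t).1 (g t).2) * Pmat x).trace).re := by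
          rw [Finset.sum_mul]
          apply Finset.sum_congr rfl
          intro g hg
          rw [hwconst g hg]
          ring
      _ ≤ ∑ g : Fin n → 𝒳 × 𝒮, (∏ t, (P (g t).1 * Q0 (g t).1 (g t).2))
            * ((tensorPow n (fun t => ρ (g t).1 (g t).2) * Pmat x).trace).re :=
          Finset.sum_le_sum_of_subset_of_nonneg (Finset.subset_univ _)
            (fun g _ _ => mul_nonneg (hwnn g) (hGnn g))
      _ = ((tensorPow n (fun _ => ∑ a, (P a : ℂ) • avgChannel ρ Q0 a) * Pmat x).trace).re :=
          hTr.symm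
      _ < (2 : ℝ) ^ (-(n : ℝ) * (infQHolevo ρ P - ν)) := hbb
  -- ===== counting estimate =====
  have hkey := key_count Z hn1
  have hstabz : (cz : ℝ) ≤ ∏ a : 𝒳 × 𝒮, ((occ Z a).factorial : ℝ) := by
    have h := AVCAux.stab_le_prod_factorial Z
    rw [hczdef]
    exact_mod_cast h
  have hpeq : p = (∏ a : 𝒳 × 𝒮, ((occ Z a : ℝ)) ^ (occ Z a)) / (n:ℝ)^n := by
    rw [hp1, AVCAux.prod_comp_occ Z (fun i => (occ Z i : ℝ) / n)]
    rw [Finset.prod_congr rfl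
      (fun a _ => div_pow (occ Z a : ℝ) (n:ℝ) (occ Z a))]
    rw [Finset.prod_div_distrib]
    congr 1
    rw [Finset.prod_pow_eq_pow_sum, AVCAux.sum_occ]
  have hpocc : ∏ a : 𝒳 × 𝒮, ((occ Z a : ℝ)) ^ (occ Z a) = p * (n:ℝ)^n := by
    rw [hpeq]
    field_simp
  have i4 : 1 ≤ (Real.exp 1 * n) ^ (Fintype.card (𝒳 × 𝒮)) * ((SZ.card : ℝ) * p) := by
    have hnn : (0:ℝ) < (n:ℝ)^n := by positivity
    have hczR : (0:ℝ) < (cz:ℝ) := by exact_mod_cast hcz1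
    have h5 : 1 * ((n:ℝ)^n * (cz:ℝ))
        ≤ ((Real.exp 1 * n) ^ (Fintype.card (𝒳 × 𝒮)) * ((SZ.card : ℝ) * p))
            * ((n:ℝ)^n * (cz:ℝ)) := by
      calc 1 * ((n:ℝ)^n * (cz:ℝ)) = (n:ℝ)^n * (cz:ℝ) := by ring
        _ ≤ (n:ℝ)^n * ∏ a : 𝒳 × 𝒮, ((occ Z a).factorial : ℝ) :=
            mul_le_mul_of_nonneg_left hstabz (le_of_lt hnn)
        _ ≤ (Real.exp 1 * n) ^ (Fintype.card (𝒳 × 𝒮)) * (n.factorial : ℝ)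
              * ∏ a : 𝒳 × 𝒮, ((occ Z a : ℝ)) ^ (occ Z a) := hkey
        _ = (Real.exp 1 * n) ^ (Fintype.card (𝒳 × 𝒮)) * ((cz:ℝ) * (SZ.card:ℝ))
              * (p * (n:ℝ)^n) := by rw [hfzR, hpocc]
        _ = ((Real.exp 1 * n) ^ (Fintype.card (𝒳 × 𝒮)) * ((SZ.card : ℝ) * p))
              * ((n:ℝ)^n * (cz:ℝ)) := by ring
    have hApos : (0:ℝ) < (n:ℝ)^n * (cz:ℝ) := mul_pos (pow_pos hnR n) hczR
    have := (mul_le_mul_iff_of_pos_right hApos).mp h5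
    simpa using this
  -- ===== final assembly =====
  rw [hT]
  have hval : (1 / (SX.card : ℝ)) * ∑ x' ∈ SX,
        ((tensorPow n (fun t => ρ (x t) (s t)) * Pmat x').trace).re
      = (∑ g ∈ SZ, ((tensorPow n (fun t => ρ (g t).1 (g t).2) * Pmat x).trace).re)
          / (SZ.card : ℝ) := by
    rw [one_div, inv_mul_eq_div]
    rw [div_eq_div_iff hSXpos.ne' hSZpos.ne']
    have hEq : (cx : ℝ) * ∑ x' ∈ SX,
          ((tensorPow n (fun t => ρ (x t) (s t)) * Pmat x').trace).re
        = (cz : ℝ) * ∑ g ∈ SZ,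
            ((tensorPow n (fun t => ρ (g t).1 (g t).2) * Pmat x).trace).re := by
      rw [← e1, e3, e4]
    have h2 : (cx:ℝ) * ((∑ x' ∈ SX,
          ((tensorPow n (fun t => ρ (x t) (s t)) * Pmat x').trace).re) * (SZ.card:ℝ))
        = (cx:ℝ) * ((∑ g ∈ SZ,
            ((tensorPow n (fun t => ρ (g t).1 (g t).2) * Pmat x).trace).re) * (SX.card:ℝ)) := by
      calc (cx:ℝ) * ((∑ x' ∈ SX,
            ((tensorPow n (fun t => ρ (x t) (s t)) * Pmat x').trace).re) * (SZ.card:ℝ))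
          = ((cx:ℝ) * ∑ x' ∈ SX,
              ((tensorPow n (fun t => ρ (x t) (s t)) * Pmat x').trace).re) * (SZ.card:ℝ) := by
            ring
        _ = ((cz:ℝ) * ∑ g ∈ SZ,
              ((tensorPow n (fun t => ρ (g t).1 (g t).2) * Pmat x).trace).re) * (SZ.card:ℝ) := by
            rw [hEq]
        _ = (∑ g ∈ SZ,
              ((tensorPow n (fun t => ρ (g t).1 (g t).2) * Pmat x).trace).re)
                * ((cz:ℝ) * (SZ.card:ℝ)) := by ring
        _ = (∑ g ∈ SZ,
              ((tensorPow n (fun t => ρ (g t).1 (g t).2) * Pmat x).trace).re)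
                * ((cx:ℝ) * (SX.card:ℝ)) := by rw [hfzR, hfxR]
        _ = (cx:ℝ) * ((∑ g ∈ SZ,
              ((tensorPow n (fun t => ρ (g t).1 (g t).2) * Pmat x).trace).re) * (SX.card:ℝ)) := by
            ring
    exact mul_left_cancel₀ hcxR.ne' h2
  rw [hval]
  have hstep1 : (∑ g ∈ SZ, ((tensorPow n (fun t => ρ (g t).1 (g t).2) * Pmat x).trace).re)
        / (SZ.card : ℝ)
      < ((2 : ℝ) ^ (-(n : ℝ) * (infQHolevo ρ P - ν)) / p) / (SZ.card : ℝ) :=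
    (div_lt_div_iff_of_pos_right hSZpos).mpr hGle
  have hstep2 : ((2 : ℝ) ^ (-(n : ℝ) * (infQHolevo ρ P - ν)) / p) / (SZ.card : ℝ)
      ≤ (2 : ℝ) ^ (-(n : ℝ) * (infQHolevo ρ P - ν))
          * (Real.exp 1 * n) ^ (Fintype.card (𝒳 × 𝒮)) := by
    rw [div_div]
    rw [div_le_iff₀ (mul_pos hppos hSZpos)]
    calc (2 : ℝ) ^ (-(n : ℝ) * (infQHolevo ρ P - ν))
        = (2 : ℝ) ^ (-(n : ℝ) * (infQHolevo ρ P - ν)) * 1 := by ring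
      _ ≤ (2 : ℝ) ^ (-(n : ℝ) * (infQHolevo ρ P - ν))
            * ((Real.exp 1 * n) ^ (Fintype.card (𝒳 × 𝒮)) * ((SZ.card : ℝ) * p)) :=
          mul_le_mul_of_nonneg_left i4 (le_of_lt hB0)
      _ = (2 : ℝ) ^ (-(n : ℝ) * (infQHolevo ρ P - ν))
            * (Real.exp 1 * n) ^ (Fintype.card (𝒳 × 𝒮)) * (p * (SZ.card : ℝ)) := by ring
  have hstep3 : (2 : ℝ) ^ (-(n : ℝ) * (infQHolevo ρ P - ν))
        * (Real.exp 1 * n) ^ (Fintype.card (𝒳 × 𝒮))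
      < (2 : ℝ) ^ (-(n : ℝ) * (infQHolevo ρ P - ν)) * (2 : ℝ) ^ ((n : ℝ) * ξ) :=
    mul_lt_mul_of_pos_left hngrow hB0
  have hfinal : (2 : ℝ) ^ (-(n : ℝ) * (infQHolevo ρ P - ν)) * (2 : ℝ) ^ ((n : ℝ) * ξ)
      = (2 : ℝ) ^ (-(n : ℝ) * (infQHolevo ρ P - ν - ξ)) := by
    rw [← Real.rpow_add (by norm_num : (0:ℝ) < 2)]
    congr 1
    ring
  calc (∑ g ∈ SZ, ((tensorPow n (fun t => ρ (g t).1 (g t).2) * Pmat x).trace).re)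
        / (SZ.card : ℝ)
      < ((2 : ℝ) ^ (-(n : ℝ) * (infQHolevo ρ P - ν)) / p) / (SZ.card : ℝ) := hstep1
    _ ≤ (2 : ℝ) ^ (-(n : ℝ) * (infQHolevo ρ P - ν))
          * (Real.exp 1 * n) ^ (Fintype.card (𝒳 × 𝒮)) := hstep2
    _ < (2 : ℝ) ^ (-(n : ℝ) * (infQHolevo ρ P - ν)) * (2 : ℝ) ^ ((n : ℝ) * ξ) := hstep3
    _ = (2 : ℝ) ^ (-(n : ℝ) * (infQHolevo ρ P - ν - ξ)) := hfinal


end
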